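/- Let c ∈ (−1,1), ε ∈ [0, 1+|c|), and let T ∈ B(H,K) be a nonzero (ε,c)-angle preserving bounded linear map. Then for all x, y ∈ H: √((1+|c|)(1−|c|−ε)/((1−|c|)(1+|c|+ε)))·‖Tx‖·‖y‖ ≤ ‖Ty‖·‖x‖. -/

import Mathlib

set_option maxHeartbeats 1000000


open scoped RealInnerProductSpace

/-- The minimum modulus `[T]` of a bounded linear map: the infimum of `‖T x‖`
over unit vectors `x`. -/
noncomputable def minMod {H K : Type*} [NormedAddCommGroup H] [InnerProductSpace ℝ H]
    [NormedAddCommGroup K] [InnerProductSpace ℝ K] (T : H →L[ℝ] K) : ℝ :=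
  ⨅ x : {x : H // ‖x‖ = 1}, ‖T x‖

/-- `T` is `(ε, c)`-angle preserving. -/
def AnglePres {H K : Type*} [NormedAddCommGroup H] [InnerProductSpace ℝ H]
    [NormedAddCommGroup K] [InnerProductSpace ℝ K] (c ε : ℝ) (T : H →L[ℝ] K) : Prop :=
  ∀ x y : H, ⟪x, y⟫ = c * ‖x‖ * ‖y‖ →
    |⟪T x, T y⟫ - c * ‖T x‖ * ‖T y‖| ≤ ε * ‖T x‖ * ‖T y‖

/-- `ε̂(T, c)`: the smallest `ε` for which `T` is `(ε, c)`-angle preserving. -/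
noncomputable def epsHat {H K : Type*} [NormedAddCommGroup H] [InnerProductSpace ℝ H]
    [NormedAddCommGroup K] [InnerProductSpace ℝ K] (c : ℝ) (T : H →L[ℝ] K) : ℝ :=
  sInf {ε : ℝ | ε ∈ Set.Icc 0 (1 + |c|) ∧ AnglePres c ε T}

section Aux

variable {H K : Type*} [NormedAddCommGroup H] [InnerProductSpace ℝ H]
    [NormedAddCommGroup K] [InnerProductSpace ℝ K]

lemma inner_comb (x z : H) (hx : ‖x‖ = 1) (hz : ‖z‖ = 1) (hxz : ⟪x, z⟫ = 0)
    (α β γ δ : ℝ) :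
    ⟪α • x + β • z, γ • x + δ • z⟫ = α * γ + β * δ := by
  have hxx : ⟪x, x⟫ = (1 : ℝ) := by rw [real_inner_self_eq_norm_sq, hx]; norm_num
  have hzz : ⟪z, z⟫ = (1 : ℝ) := by rw [real_inner_self_eq_norm_sq, hz]; norm_num
  have hzx : ⟪z, x⟫ = (0 : ℝ) := by rw [real_inner_comm]; exact hxz
  simp only [inner_add_left, inner_add_right, real_inner_smul_left, real_inner_smul_right,
    hxx, hzz, hxz, hzx]
  ring

lemma inner_comb' (X Z : K) (α β γ δ : ℝ) :
    ⟪α • X + β • Z, γ • X + δ • Z⟫ =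
      α * γ * ⟪X, X⟫ + (α * δ + β * γ) * ⟪X, Z⟫ + β * δ * ⟪Z, Z⟫ := by
  have hzx : ⟪Z, X⟫ = ⟪X, Z⟫ := real_inner_comm _ _
  simp only [inner_add_left, inner_add_right, real_inner_smul_left, real_inner_smul_right, hzx]
  ring

/-- Core estimate, assuming `⟪T x, T z⟫ ≥ 0`. -/
lemma keyE' (c ε : ℝ) (hc : |c| < 1) (hε : 0 ≤ ε) (T : H →L[ℝ] K)
    (hpres : AnglePres c ε T) (x z : H)
    (hx : ‖x‖ = 1) (hz : ‖z‖ = 1) (hxz : ⟪x, z⟫ = 0) (ht : 0 ≤ ⟪T x, T z⟫) :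
    Real.sqrt (((‖T x‖ ^ 2 - ‖T z‖ ^ 2) / 2) ^ 2 + ⟪T x, T z⟫ ^ 2) * (1 - c ^ 2 - ε * |c|) ≤
      ε * ((‖T x‖ ^ 2 + ‖T z‖ ^ 2) / 2) := by
  set a : ℝ := ‖T x‖ ^ 2 with ha
  set b : ℝ := ‖T z‖ ^ 2 with hb
  set t : ℝ := ⟪T x, T z⟫ with htdef
  set M : ℝ := (a + b) / 2 with hM
  set E : ℝ := Real.sqrt (((a - b) / 2) ^ 2 + t ^ 2) with hE
  have hEnn : 0 ≤ E := Real.sqrt_nonneg _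
  have hE2 : E ^ 2 = ((a - b) / 2) ^ 2 + t ^ 2 := Real.sq_sqrt (by positivity)
  have hannn : 0 ≤ a := by positivity
  have hbnn : 0 ≤ b := by positivity
  have hMnn : 0 ≤ M := by positivity
  clear_value a b t M E
  rcases eq_or_lt_of_le hEnn with hE0 | hEpos
  · rw [← hE0]
    have : (0:ℝ) ≤ ε * M := by positivity
    linarith [this]
  -- E > 0
  have hXle : |(a - b) / 2| ≤ E := by
    nlinarith [abs_nonneg ((a - b)/2), sq_abs ((a-b)/2), sq_nonneg t, sq_nonneg (E - |(a-b)/2|),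
      sq_nonneg (E + |(a-b)/2|)]
  set ω : ℝ := Real.arccos ((a - b) / (2 * E)) with hω
  set γ : ℝ := Real.arccos c with hγ
  have hcosω : Real.cos ω = (a - b) / (2 * E) := by
    apply Real.cos_arccos
    · rw [le_div_iff₀ (by linarith : (0:ℝ) < 2 * E)]
      nlinarith [abs_le.mp hXle]
    · rw [div_le_iff₀ (by linarith : (0:ℝ) < 2 * E)]
      nlinarith [abs_le.mp hXle]
  have hsinω : Real.sin ω = t / E := by
    rw [hω, Real.sin_arccos]
    have h1 : 1 - ((a - b) / (2 * E)) ^ 2 = (t / E) ^ 2 := by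
      field_simp
      nlinarith [hE2]
    rw [h1, Real.sqrt_sq (by positivity)]
  have hcosγ : Real.cos γ = c := Real.cos_arccos (by linarith [abs_le.mp (le_of_lt hc)])
    (by linarith [abs_le.mp (le_of_lt hc)])
  clear_value ω γ
  set θ : ℝ := (ω - γ) / 2 with hθ
  set φ : ℝ := (ω + γ) / 2 with hφ
  clear_value θ φ
  set u : H := Real.cos θ • x + Real.sin θ • z with hu
  set v : H := Real.cos φ • x + Real.sin φ • z with hv
  clear_value u v
  have hpyθ : Real.cos θ ^ 2 + Real.sin θ ^ 2 = 1 := by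
    rw [add_comm]; exact Real.sin_sq_add_cos_sq θ
  have hpyφ : Real.cos φ ^ 2 + Real.sin φ ^ 2 = 1 := by
    rw [add_comm]; exact Real.sin_sq_add_cos_sq φ
  have hnu : ‖u‖ = 1 := by
    have h2 : ‖u‖ ^ 2 = 1 := by
      rw [← real_inner_self_eq_norm_sq, hu, inner_comb x z hx hz hxz]
      linarith [hpyθ]
    calc ‖u‖ = Real.sqrt (‖u‖ ^ 2) := (Real.sqrt_sq (norm_nonneg u)).symm
      _ = 1 := by rw [h2, Real.sqrt_one]
  have hnv : ‖v‖ = 1 := by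
    have h2 : ‖v‖ ^ 2 = 1 := by
      rw [← real_inner_self_eq_norm_sq, hv, inner_comb x z hx hz hxz]
      linarith [hpyφ]
    calc ‖v‖ = Real.sqrt (‖v‖ ^ 2) := (Real.sqrt_sq (norm_nonneg v)).symm
      _ = 1 := by rw [h2, Real.sqrt_one]
  have huv : ⟪u, v⟫ = c * ‖u‖ * ‖v‖ := by
    rw [hnu, hnv, hu, hv, inner_comb x z hx hz hxz]
    have : Real.cos θ * Real.cos φ + Real.sin θ * Real.sin φ = Real.cos (θ - φ) :=
      (Real.cos_sub θ φ).symm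
    rw [this, show θ - φ = -γ by rw [hθ, hφ]; ring, Real.cos_neg, hcosγ]; ring
  have hTu : T u = Real.cos θ • T x + Real.sin θ • T z := by
    rw [hu]; simp [map_add, map_smul]
  have hTv : T v = Real.cos φ • T x + Real.sin φ • T z := by
    rw [hv]; simp [map_add, map_smul]
  -- inner products in K
  have hiuv : ⟪T u, T v⟫ = c * M + E := by
    rw [hTu, hTv, inner_comb', real_inner_self_eq_norm_sq, real_inner_self_eq_norm_sq]
    rw [← ha, ← hb, ← htdef]
    have h1 : Real.cos θ * Real.cos φ = (Real.cos γ + Real.cos ω) / 2 := by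
      have e1 := Real.cos_sub φ θ
      have e2 := Real.cos_add θ φ
      rw [show φ - θ = γ by rw [hθ, hφ]; ring] at e1
      rw [show θ + φ = ω by rw [hθ, hφ]; ring] at e2
      linarith [e1, e2]
    have h2 : Real.sin θ * Real.sin φ = (Real.cos γ - Real.cos ω) / 2 := by
      have e1 := Real.cos_sub φ θ
      have e2 := Real.cos_add θ φ
      rw [show φ - θ = γ by rw [hθ, hφ]; ring] at e1
      rw [show θ + φ = ω by rw [hθ, hφ]; ring] at e2
      linarith [e1, e2]
    have h3 : Real.cos θ * Real.sin φ + Real.sin θ * Real.cos φ = Real.sin ω := by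
      have e := Real.sin_add θ φ
      rw [show θ + φ = ω by rw [hθ, hφ]; ring] at e
      linarith [e]
    have hEne : E ≠ 0 := ne_of_gt hEpos
    have hEw1 : E * Real.cos ω = (a - b) / 2 := by
      rw [hcosω]; field_simp
    have hEw2 : E * Real.sin ω = t := by
      rw [hsinω]; field_simp
    have hgoal : E * (Real.cos θ * Real.cos φ * a
          + (Real.cos θ * Real.sin φ + Real.sin θ * Real.cos φ) * t
          + Real.sin θ * Real.sin φ * b)
        = E * (c * M + E) := by
      rw [h1, h2, h3, hM]
      linear_combination (E * (a + b) / 2) * hcosγ + ((a - b) / 2) * hEw1 + t * hEw2 - hE2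
    exact mul_left_cancel₀ hEne hgoal
  have hnTu : ‖T u‖ ^ 2 = M + E * c := by
    rw [← real_inner_self_eq_norm_sq, hTu, inner_comb', real_inner_self_eq_norm_sq, real_inner_self_eq_norm_sq, ← ha, ← hb, ← htdef]
    have e1 : Real.cos (ω - 2 * θ) = Real.cos γ := by
      rw [show ω - 2 * θ = γ by rw [hθ]; ring]
    rw [Real.cos_sub] at e1
    have e2 : Real.cos (2 * θ) = Real.cos θ ^ 2 - Real.sin θ ^ 2 := by
      rw [Real.cos_two_mul]; nlinarith [hpyθ]
    have e3 : Real.sin (2 * θ) = 2 * Real.sin θ * Real.cos θ := Real.sin_two_mul θ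
    have hEω1 : E * Real.cos ω = (a - b) / 2 := by
      rw [hcosω]; field_simp
    have hEω2 : E * Real.sin ω = t := by
      rw [hsinω]; field_simp
    -- ‖Tu‖² = M + ((a-b)/2) cos2θ + t sin2θ = M + E cos(ω-2θ) = M + E cosγ
    have : Real.cos θ * Real.cos θ * a + (Real.cos θ * Real.sin θ + Real.sin θ * Real.cos θ) * t
        + Real.sin θ * Real.sin θ * b
        = M + (E * Real.cos ω) * (Real.cos θ ^ 2 - Real.sin θ ^ 2)
          + (E * Real.sin ω) * (2 * Real.sin θ * Real.cos θ) := by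
      rw [hEω1, hEω2, hM]; linear_combination ((a + b) / 2) * hpyθ
    rw [this, ← e2, ← e3]
    linear_combination E * e1 + E * hcosγ
  have hnTv : ‖T v‖ ^ 2 = M + E * c := by
    rw [← real_inner_self_eq_norm_sq, hTv, inner_comb', real_inner_self_eq_norm_sq, real_inner_self_eq_norm_sq, ← ha, ← hb, ← htdef]
    have e1 : Real.cos (2 * φ - ω) = Real.cos γ := by
      rw [show 2 * φ - ω = γ by rw [hφ]; ring]
    rw [Real.cos_sub] at e1
    have e2 : Real.cos (2 * φ) = Real.cos φ ^ 2 - Real.sin φ ^ 2 := by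
      rw [Real.cos_two_mul]; nlinarith [hpyφ]
    have e3 : Real.sin (2 * φ) = 2 * Real.sin φ * Real.cos φ := Real.sin_two_mul φ
    have hEω1 : E * Real.cos ω = (a - b) / 2 := by
      rw [hcosω]; field_simp
    have hEω2 : E * Real.sin ω = t := by
      rw [hsinω]; field_simp
    have : Real.cos φ * Real.cos φ * a + (Real.cos φ * Real.sin φ + Real.sin φ * Real.cos φ) * t
        + Real.sin φ * Real.sin φ * b
        = M + (E * Real.cos ω) * (Real.cos φ ^ 2 - Real.sin φ ^ 2)
          + (E * Real.sin ω) * (2 * Real.sin φ * Real.cos φ) := by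
      rw [hEω1, hEω2, hM]; linear_combination ((a + b) / 2) * hpyφ
    rw [this, ← e2, ← e3]
    linear_combination E * e1 + E * hcosγ
  have hprod : ‖T u‖ * ‖T v‖ = M + E * c := by
    have h1 : ‖T u‖ = ‖T v‖ := by
      have h := hnTu.trans hnTv.symm
      calc ‖T u‖ = Real.sqrt (‖T u‖ ^ 2) := (Real.sqrt_sq (norm_nonneg _)).symm
        _ = Real.sqrt (‖T v‖ ^ 2) := by rw [h]
        _ = ‖T v‖ := Real.sqrt_sq (norm_nonneg _)
    rw [h1, ← sq, hnTv]
  have hineq := hpres u v huv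
  have e1 : c * ‖T u‖ * ‖T v‖ = c * (M + E * c) := by rw [mul_assoc, hprod]
  have e2 : ε * ‖T u‖ * ‖T v‖ = ε * (M + E * c) := by rw [mul_assoc, hprod]
  rw [hiuv, e1, e2] at hineq
  have habs := abs_le.mp hineq
  -- c*M + E - c*(M + E*c) = E*(1-c²)
  have h1 : E * (1 - c ^ 2) ≤ ε * M + ε * c * E := by linarith [habs.2]
  have h2 : ε * c * E ≤ ε * |c| * E := by
    have h3 : 0 ≤ ε * E := mul_nonneg hε hEnn
    have h4 : c ≤ |c| := le_abs_self c
    calc ε * c * E = c * (ε * E) := by ring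
      _ ≤ |c| * (ε * E) := mul_le_mul_of_nonneg_right h4 h3
      _ = ε * |c| * E := by ring
  linarith [h1, h2]

/-- Core estimate. -/
lemma keyE (c ε : ℝ) (hc : |c| < 1) (hε : 0 ≤ ε) (T : H →L[ℝ] K)
    (hpres : AnglePres c ε T) (x z : H)
    (hx : ‖x‖ = 1) (hz : ‖z‖ = 1) (hxz : ⟪x, z⟫ = 0) :
    Real.sqrt (((‖T x‖ ^ 2 - ‖T z‖ ^ 2) / 2) ^ 2 + ⟪T x, T z⟫ ^ 2) * (1 - c ^ 2 - ε * |c|) ≤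
      ε * ((‖T x‖ ^ 2 + ‖T z‖ ^ 2) / 2) := by
  rcases le_or_gt 0 ⟪T x, T z⟫ with ht | ht
  · exact keyE' c ε hc hε T hpres x z hx hz hxz ht
  · have h := keyE' c ε hc hε T hpres x (-z) hx (by rw [norm_neg, hz])
      (by rw [inner_neg_right, hxz, neg_zero]) (by rw [map_neg, inner_neg_right]; linarith)
    rw [map_neg, norm_neg, inner_neg_right] at h
    calc Real.sqrt (((‖T x‖ ^ 2 - ‖T z‖ ^ 2) / 2) ^ 2 + ⟪T x, T z⟫ ^ 2) * (1 - c ^ 2 - ε * |c|)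
        = Real.sqrt (((‖T x‖ ^ 2 - ‖T z‖ ^ 2) / 2) ^ 2 + (-⟪T x, T z⟫) ^ 2)
          * (1 - c ^ 2 - ε * |c|) := by ring_nf
      _ ≤ ε * ((‖T x‖ ^ 2 + ‖T z‖ ^ 2) / 2) := h

/-- The estimate for unit vectors. -/
lemma unit_case (c ε : ℝ) (hc : |c| < 1) (hε : 0 ≤ ε) (h1 : 0 < 1 - |c| - ε)
    (T : H →L[ℝ] K) (hpres : AnglePres c ε T) (x y : H) (hx : ‖x‖ = 1) (hy : ‖y‖ = 1) :
    (1 + |c|) * (1 - |c| - ε) / ((1 - |c|) * (1 + |c| + ε)) * ‖T x‖ ^ 2 ≤ ‖T y‖ ^ 2 := by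
  set C : ℝ := (1 + |c|) * (1 - |c| - ε) / ((1 - |c|) * (1 + |c| + ε)) with hC
  have habs : |c| ^ 2 = c ^ 2 := sq_abs c
  have hden : 0 < (1 - |c|) * (1 + |c| + ε) := by
    have := abs_nonneg c
    nlinarith
  have hnum : 0 < (1 + |c|) * (1 - |c| - ε) := by
    have := abs_nonneg c
    nlinarith
  have hCpos : 0 < C := div_pos hnum hden
  set s : ℝ := ⟪x, y⟫ with hs
  by_cases hyx : y - s • x = 0
  · -- y = s • x with |s| = 1
    have hyeq : y = s • x := by rwa [sub_eq_zero] at hyx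
    have hs1 : |s| = 1 := by
      have := congrArg norm hyeq
      rw [hy, norm_smul, hx, Real.norm_eq_abs, mul_one] at this
      exact this.symm
    have hTy : ‖T y‖ = ‖T x‖ := by
      rw [hyeq, map_smul, norm_smul, Real.norm_eq_abs, hs1, one_mul]
    rw [hTy]
    have hCle : C ≤ 1 := by
      rw [hC, div_le_one hden]
      nlinarith [abs_nonneg c]
    nlinarith [sq_nonneg (‖T x‖), hCpos]
  · set r : ℝ := ‖y - s • x‖ with hr
    have hrpos : 0 < r := norm_pos_iff.mpr hyx
    set z : H := r⁻¹ • (y - s • x) with hzdef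
    have hxx : ⟪x, x⟫ = (1:ℝ) := by rw [real_inner_self_eq_norm_sq, hx]; norm_num
    have hnz : ‖z‖ = 1 := by
      rw [hzdef, norm_smul, Real.norm_eq_abs, abs_inv, abs_of_pos hrpos, ← hr,
        inv_mul_cancel₀ (ne_of_gt hrpos)]
    have hxz : ⟪x, z⟫ = 0 := by
      rw [hzdef, real_inner_smul_right, inner_sub_right, real_inner_smul_right, hxx, ← hs]
      ring
    have hyz : y = s • x + r • z := by
      rw [hzdef, smul_smul, mul_inv_cancel₀ (ne_of_gt hrpos), one_smul]
      abel
    have hsr : s ^ 2 + r ^ 2 = 1 := by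
      have h2 : ‖y‖ ^ 2 = s ^ 2 + r ^ 2 := by
        rw [← real_inner_self_eq_norm_sq]
        rw [hyz, inner_comb x z hx hnz hxz]; ring
      rw [hy] at h2; linarith [h2]
    -- notation
    set a : ℝ := ‖T x‖ ^ 2 with ha
    set b : ℝ := ‖T z‖ ^ 2 with hb
    set t : ℝ := ⟪T x, T z⟫ with htdef
    set M : ℝ := (a + b) / 2 with hM
    set E : ℝ := Real.sqrt (((a - b) / 2) ^ 2 + t ^ 2) with hE
    have hEnn : 0 ≤ E := Real.sqrt_nonneg _
    have hE2 : E ^ 2 = ((a - b) / 2) ^ 2 + t ^ 2 := Real.sq_sqrt (by positivity)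
    have hkey := keyE c ε hc hε T hpres x z hx hnz hxz
    rw [← ha, ← hb, ← htdef, ← hE, ← hM] at hkey
    have hale : a ≤ M + E := by
      nlinarith [sq_nonneg t, sq_nonneg (E - (a - b)/2), sq_nonneg (E + (a - b)/2), hEnn]
    have hq2 : M - E ≤ ‖T y‖ ^ 2 := by
      have hTy2 : ‖T y‖ ^ 2 = s ^ 2 * a + 2 * s * r * t + r ^ 2 * b := by
        rw [← real_inner_self_eq_norm_sq]
        have : T y = s • T x + r • T z := by rw [hyz]; simp [map_add, map_smul]
        rw [this, inner_comb', real_inner_self_eq_norm_sq, real_inner_self_eq_norm_sq, ← ha, ← hb, ← htdef]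
        ring
      rw [hTy2]
      have hid : E ^ 2 - ((s^2 - r^2) * ((a-b)/2) + 2*s*r*t) ^ 2
          = ((s^2 - r^2) * t - 2*s*r*((a-b)/2)) ^ 2 := by
        linear_combination hE2 - (((a-b)/2)^2 + t^2) * (s^2 + r^2 + 1) * hsr
      have hL : ((s^2 - r^2) * ((a-b)/2) + 2*s*r*t) ^ 2 ≤ E ^ 2 := by
        linarith [hid, sq_nonneg ((s^2 - r^2) * t - 2*s*r*((a-b)/2))]
      have hL2 : -E ≤ (s^2 - r^2) * ((a-b)/2) + 2*s*r*t := by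
        nlinarith [hEnn, hL]
      nlinarith [hL2, hsr]
    have hCME : C * (M + E) ≤ M - E := by
      rw [hC, div_mul_eq_mul_div, div_le_iff₀ hden]
      -- (1+|c|)(1-|c|-ε) = (1-c²-ε|c|) - ε ; (1-|c|)(1+|c|+ε) = (1-c²-ε|c|) + ε
      nlinarith [hkey, habs]
    calc C * a ≤ C * (M + E) := by nlinarith [hCpos, hale]
      _ ≤ M - E := hCME
      _ ≤ ‖T y‖ ^ 2 := hq2

end Aux

theorem stmt_14 {H K : Type*} [NormedAddCommGroup H] [InnerProductSpace ℝ H] [CompleteSpace H]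
    [NormedAddCommGroup K] [InnerProductSpace ℝ K] [CompleteSpace K]
    (hH : 2 ≤ Module.rank ℝ H)
    (c : ℝ) (hc : c ∈ Set.Ioo (-1 : ℝ) 1) (ε : ℝ) (hε : ε ∈ Set.Ico 0 (1 + |c|))
    (T : H →L[ℝ] K) (hT : T ≠ 0) (hpres : AnglePres c ε T) :
    ∀ x y : H,
      Real.sqrt ((1 + |c|) * (1 - |c| - ε) / ((1 - |c|) * (1 + |c| + ε))) * ‖T x‖ * ‖y‖ ≤
        ‖T y‖ * ‖x‖ := by
  obtain ⟨hc1, hc2⟩ := hc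
  obtain ⟨hε0, hε1⟩ := hε
  have hcabs : |c| < 1 := abs_lt.mpr ⟨hc1, hc2⟩
  set C : ℝ := (1 + |c|) * (1 - |c| - ε) / ((1 - |c|) * (1 + |c| + ε)) with hC
  intro x y
  by_cases h1 : 1 - |c| - ε ≤ 0
  · have hCnp : C ≤ 0 := by
      apply div_nonpos_of_nonpos_of_nonneg
      · nlinarith [abs_nonneg c]
      · nlinarith [abs_nonneg c]
    rw [Real.sqrt_eq_zero_of_nonpos hCnp]
    simp only [zero_mul]
    positivity
  push_neg at h1
  by_cases hx0 : x = 0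
  · subst hx0
    simp
  by_cases hy0 : y = 0
  · subst hy0
    simp only [norm_zero, mul_zero]
    positivity
  have hxn : (0:ℝ) < ‖x‖ := norm_pos_iff.mpr hx0
  have hyn : (0:ℝ) < ‖y‖ := norm_pos_iff.mpr hy0
  have hux : ‖(‖x‖⁻¹ • x : H)‖ = 1 := by
    rw [norm_smul, Real.norm_eq_abs, abs_inv, abs_of_pos hxn, inv_mul_cancel₀ (ne_of_gt hxn)]
  have huy : ‖(‖y‖⁻¹ • y : H)‖ = 1 := by
    rw [norm_smul, Real.norm_eq_abs, abs_inv, abs_of_pos hyn, inv_mul_cancel₀ (ne_of_gt hyn)]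
  have hkey := unit_case c ε hcabs hε0 h1 T hpres (‖x‖⁻¹ • x) (‖y‖⁻¹ • y) hux huy
  rw [map_smul, map_smul, norm_smul, norm_smul, Real.norm_eq_abs, Real.norm_eq_abs,
    abs_inv, abs_inv, abs_of_pos hxn, abs_of_pos hyn] at hkey
  rw [← hC] at hkey
  have hden : 0 < (1 - |c|) * (1 + |c| + ε) := by nlinarith [abs_nonneg c]
  have hnum : 0 < (1 + |c|) * (1 - |c| - ε) := by nlinarith [abs_nonneg c]
  have hCpos : 0 < C := div_pos hnum hden
  have hkey2 : C * (‖T x‖ * ‖y‖) ^ 2 ≤ (‖T y‖ * ‖x‖) ^ 2 := by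
    have h3 : C * (‖x‖⁻¹ * ‖T x‖) ^ 2 * (‖x‖ * ‖y‖) ^ 2 ≤
        (‖y‖⁻¹ * ‖T y‖) ^ 2 * (‖x‖ * ‖y‖) ^ 2 := by
      nlinarith [hkey, sq_nonneg (‖x‖ * ‖y‖), pow_pos (mul_pos hxn hyn) 2]
    have e1 : (‖x‖⁻¹ * ‖T x‖) ^ 2 * (‖x‖ * ‖y‖) ^ 2 = (‖T x‖ * ‖y‖) ^ 2 := by
      field_simp
    have e2 : (‖y‖⁻¹ * ‖T y‖) ^ 2 * (‖x‖ * ‖y‖) ^ 2 = (‖T y‖ * ‖x‖) ^ 2 := by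
      field_simp
    calc C * (‖T x‖ * ‖y‖) ^ 2 = C * (‖x‖⁻¹ * ‖T x‖) ^ 2 * (‖x‖ * ‖y‖) ^ 2 := by
          rw [mul_assoc, e1]
      _ ≤ (‖y‖⁻¹ * ‖T y‖) ^ 2 * (‖x‖ * ‖y‖) ^ 2 := h3
      _ = (‖T y‖ * ‖x‖) ^ 2 := e2
  calc Real.sqrt C * ‖T x‖ * ‖y‖ = Real.sqrt (C * (‖T x‖ * ‖y‖) ^ 2) := by
        rw [Real.sqrt_mul hCpos.le, Real.sqrt_sq (by positivity)]
        ring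
    _ ≤ Real.sqrt ((‖T y‖ * ‖x‖) ^ 2) := Real.sqrt_le_sqrt hkey2
    _ = ‖T y‖ * ‖x‖ := Real.sqrt_sq (by positivity)
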